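/- Let J be a finite set, v̄_j > 0 for j ∈ J, φ_j := φ_{v̄_j}, and ψ_j(z) := v̄_j/(e(1−z)²) for 0 ≤ z < 1 − 1/e and ψ_j(z) := 0 for 1 − 1/e ≤ z ≤ 1. For any measurable Q_j : [0,1] → [0,1] (j ∈ J), ∫_0^1 [Σ_{j∈J} φ_j(z)·Q_j(z) − ∫_0^z Σ_{j∈J} ψ_j(s)·Q_j(s) ds] dz = Σ_{j∈J} v̄_j · ∫_{1−1/e}^1 Q_j(z) dz. -/

import Mathlib

/-- The equal-revenue quantile function: `φ_{v̄}(z) = v̄/(e(1−z))` for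
`z < 1 − 1/e` and `φ_{v̄}(z) = v̄` for `z ≥ 1 − 1/e`. -/
noncomputable def erQuantile (vb z : ℝ) : ℝ :=
  if z < 1 - 1 / Real.exp 1 then vb / (Real.exp 1 * (1 - z)) else vb

/-- Its derivative off `z = 1 − 1/e`: `ψ(z) = v̄/(e(1−z)²)` for `z < 1 − 1/e`
and `0` for `z ≥ 1 − 1/e`. -/
noncomputable def erQuantileDeriv (vb z : ℝ) : ℝ :=
  if z < 1 - 1 / Real.exp 1 then vb / (Real.exp 1 * (1 - z) ^ 2) else 0

open MeasureTheory Set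

lemma II_glob {f : ℝ → ℝ} (hm : Measurable f) {C : ℝ} (hb : ∀ x, |f x| ≤ C)
    (a b : ℝ) : IntervalIntegrable f MeasureTheory.volume a b := by
  rw [intervalIntegrable_iff]
  haveI : IsFiniteMeasure (volume.restrict (Set.uIoc a b)) :=
    ⟨by rw [Measure.restrict_apply_univ]; exact measure_Ioc_lt_top⟩
  refine ⟨hm.aestronglyMeasurable.restrict, HasFiniteIntegral.of_bounded (C := C) ?_⟩
  filter_upwards with x
  simpa [Real.norm_eq_abs] using hb x

lemma II_01 {f : ℝ → ℝ} (hm : Measurable f) {C : ℝ}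
    (hb : ∀ x ∈ Set.Ioc (0:ℝ) 1, |f x| ≤ C) :
    IntervalIntegrable f MeasureTheory.volume 0 1 := by
  rw [intervalIntegrable_iff_integrableOn_Ioc_of_le zero_le_one]
  haveI : IsFiniteMeasure (volume.restrict (Set.Ioc (0:ℝ) 1)) :=
    ⟨by rw [Measure.restrict_apply_univ]; exact measure_Ioc_lt_top⟩
  refine ⟨hm.aestronglyMeasurable.restrict, HasFiniteIntegral.of_bounded (C := C) ?_⟩
  filter_upwards [ae_restrict_mem measurableSet_Ioc] with x hx
  simpa [Real.norm_eq_abs] using hb x hx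

lemma tri {g : ℝ → ℝ} (hm : Measurable g) {C : ℝ} (hb : ∀ s, |g s| ≤ C) :
    ∫ z in (0:ℝ)..1, (∫ s in (0:ℝ)..z, g s) = ∫ s in (0:ℝ)..1, (1 - s) * g s := by
  have hC : 0 ≤ C := (abs_nonneg _).trans (hb 0)
  set μ := volume.restrict (Set.Ioc (0:ℝ) 1) with hμ
  haveI : IsFiniteMeasure μ :=
    ⟨by rw [hμ, Measure.restrict_apply_univ]; exact measure_Ioc_lt_top⟩
  set F : ℝ → ℝ → ℝ := fun z s => if 0 < s ∧ s ≤ z then g s else 0 with hF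
  have hFm : Measurable (Function.uncurry F) := by
    have : Function.uncurry F =
        fun p : ℝ × ℝ => if p ∈ {p : ℝ × ℝ | 0 < p.2 ∧ p.2 ≤ p.1} then g p.2 else 0 := rfl
    rw [this]
    exact Measurable.ite
      ((measurableSet_lt measurable_const measurable_snd).inter
        (measurableSet_le measurable_snd measurable_fst))
      (hm.comp measurable_snd) measurable_const
  have hFi : Integrable (Function.uncurry F) (μ.prod μ) := by
    refine ⟨hFm.aestronglyMeasurable, HasFiniteIntegral.of_bounded (C := C) ?_⟩
    filter_upwards with p
    by_cases hp : 0 < p.2 ∧ p.2 ≤ p.1 <;>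
      simp [Function.uncurry, hF, hp, hC, Real.norm_eq_abs, hb p.2]
  calc ∫ z in (0:ℝ)..1, (∫ s in (0:ℝ)..z, g s)
      = ∫ z, (∫ s, F z s ∂μ) ∂μ := by
        rw [intervalIntegral.integral_of_le zero_le_one]
        refine setIntegral_congr_fun measurableSet_Ioc fun z hz => ?_
        rw [intervalIntegral.integral_of_le hz.1.le]
        have h1 : ∀ s, F z s = Set.indicator (Set.Ioc 0 z) g s := by
          intro s; simp [hF, Set.indicator_apply, Set.mem_Ioc]
        calc ∫ s in Set.Ioc (0:ℝ) z, g s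
            = ∫ s in Set.Ioc (0:ℝ) z, g s ∂μ := by
              rw [hμ, Measure.restrict_restrict measurableSet_Ioc,
                Set.inter_eq_left.2 (Set.Ioc_subset_Ioc le_rfl hz.2)]
          _ = ∫ s, F z s ∂μ := by
              simp_rw [h1]; rw [integral_indicator measurableSet_Ioc]
    _ = ∫ s, (∫ z, F z s ∂μ) ∂μ := integral_integral_swap hFi
    _ = ∫ s in Set.Ioc (0:ℝ) 1, (1 - s) * g s := by
        refine setIntegral_congr_fun measurableSet_Ioc fun s hs => ?_
        have h1 : (fun z => F z s) = Set.indicator (Set.Ici s) (fun _ => g s) := by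
          funext z; simp only [hF, Set.indicator_apply, Set.mem_Ici]
          by_cases h : s ≤ z <;> simp [h, hs.1]
        rw [h1, integral_indicator measurableSet_Ici, hμ,
          Measure.restrict_restrict measurableSet_Ici, setIntegral_const]
        have h2 : Set.Ici s ∩ Set.Ioc 0 1 = Set.Icc s 1 := by
          ext x
          simp only [Set.mem_inter_iff, Set.mem_Ici, Set.mem_Ioc, Set.mem_Icc]
          constructor
          · rintro ⟨h3, _, h5⟩; exact ⟨h3, h5⟩
          · rintro ⟨h3, h4⟩; exact ⟨h3, lt_of_lt_of_le hs.1 h3, h4⟩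
        rw [h2, Real.volume_real_Icc_of_le (by linarith [hs.2])]
        simp [smul_eq_mul]
    _ = ∫ s in (0:ℝ)..1, (1 - s) * g s :=
        (intervalIntegral.integral_of_le zero_le_one).symm

lemma key_ptwise (v z : ℝ) :
    erQuantile v z - (1 - z) * erQuantileDeriv v z
      = if z < 1 - 1 / Real.exp 1 then 0 else v := by
  unfold erQuantile erQuantileDeriv
  split_ifs with hz
  · have hE0 : (0:ℝ) < Real.exp 1 := Real.exp_pos 1
    have hinv : (0:ℝ) < 1 / Real.exp 1 := by positivity
    have h1 : (1:ℝ) - z ≠ 0 := by intro h; rw [sub_eq_zero] at h; linarith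
    field_simp
    ring
  · simp

/-- the integration-by-parts (Fubini) identity in the proof of
Proposition 2:
`∫_0^1 [Σ_j φ_j(z)·Q_j(z) − ∫_0^z Σ_j ψ_j(s)·Q_j(s) ds] dz
  = Σ_j v̄_j · ∫_{1−1/e}^1 Q_j(z) dz`. -/
theorem stmt_10 {J : Type*} [Fintype J] (vbar : J → ℝ) (hvbar : ∀ j, 0 < vbar j)
    (Q : J → ℝ → ℝ) (hQm : ∀ j, Measurable (Q j))
    (hQ : ∀ j, ∀ z ∈ Set.Icc (0:ℝ) 1, 0 ≤ Q j z ∧ Q j z ≤ 1) :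
    (∫ z in (0:ℝ)..1, ((∑ j, erQuantile (vbar j) z * Q j z)
        - ∫ s in (0:ℝ)..z, ∑ j, erQuantileDeriv (vbar j) s * Q j s))
      = ∑ j, vbar j * ∫ z in (1 - 1 / Real.exp 1)..1, Q j z := by
  have hE : (1:ℝ) < Real.exp 1 := by
    have := Real.exp_one_gt_d9; linarith
  have hE0 : (0:ℝ) < Real.exp 1 := Real.exp_pos 1
  set c : ℝ := 1 - 1 / Real.exp 1 with hc
  have hi1 : (1:ℝ) / Real.exp 1 < 1 := by rw [div_lt_one hE0]; exact hE
  have hi0 : (0:ℝ) < 1 / Real.exp 1 := by positivity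
  have hc0 : 0 < c := by rw [hc]; linarith
  have hc1 : c < 1 := by rw [hc]; linarith
  -- abbreviations
  set g : ℝ → ℝ := fun s => ∑ j, erQuantileDeriv (vbar j) s * Q j s with hgdef
  set h : ℝ → ℝ := fun z => ∑ j, erQuantile (vbar j) z * Q j z with hhdef
  set gt : ℝ → ℝ := fun s => if s ∈ Set.Ioc (0:ℝ) 1 then g s else 0 with hgtdef
  -- measurability
  have hψm : ∀ j, Measurable (erQuantileDeriv (vbar j)) := by
    intro j
    unfold erQuantileDeriv
    exact Measurable.ite measurableSet_Iio
      (measurable_const.div (((measurable_const.sub measurable_id).pow_const 2).const_mul _))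
      measurable_const
  have hφm : ∀ j, Measurable (erQuantile (vbar j)) := by
    intro j
    unfold erQuantile
    exact Measurable.ite measurableSet_Iio
      (measurable_const.div ((measurable_const.sub measurable_id).const_mul _))
      measurable_const
  have hgm : Measurable g := Finset.measurable_sum _ fun j _ => (hψm j).mul (hQm j)
  have hhm : Measurable h := Finset.measurable_sum _ fun j _ => (hφm j).mul (hQm j)
  have hgtm : Measurable gt := Measurable.ite measurableSet_Ioc hgm measurable_const
  -- bounds
  have hQb : ∀ j, ∀ z ∈ Set.Ioc (0:ℝ) 1, |Q j z| ≤ 1 := by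
    intro j z hz
    obtain ⟨h1, h2⟩ := hQ j z ⟨hz.1.le, hz.2⟩
    rw [abs_le]; exact ⟨by linarith, h2⟩
  have hψb : ∀ j z, |erQuantileDeriv (vbar j) z| ≤ vbar j * Real.exp 1 := by
    intro j z
    have hv := hvbar j
    unfold erQuantileDeriv
    split_ifs with hz
    · have h1 : (1:ℝ) / Real.exp 1 < 1 - z := by linarith
      have h2 : ((1:ℝ) / Real.exp 1) ^ 2 ≤ (1 - z) ^ 2 := by nlinarith
      have h3 : (1:ℝ) / Real.exp 1 ≤ Real.exp 1 * (1 - z) ^ 2 := by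
        have := mul_le_mul_of_nonneg_left h2 hE0.le
        calc (1:ℝ) / Real.exp 1 = Real.exp 1 * (1 / Real.exp 1) ^ 2 := by
              field_simp
          _ ≤ Real.exp 1 * (1 - z) ^ 2 := this
      rw [abs_of_nonneg (div_nonneg hv.le (by positivity))]
      calc vbar j / (Real.exp 1 * (1 - z) ^ 2)
          ≤ vbar j / (1 / Real.exp 1) :=
            div_le_div_of_nonneg_left hv.le hi0 h3
        _ = vbar j * Real.exp 1 := by rw [div_div_eq_mul_div, div_one]
    · rw [abs_zero]; exact mul_nonneg hv.le hE0.le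
  have hφb : ∀ j, ∀ z ∈ Set.Ioc (0:ℝ) 1, |erQuantile (vbar j) z| ≤ vbar j := by
    intro j z _
    have hv := hvbar j
    unfold erQuantile
    split_ifs with hz
    · have h1 : (1:ℝ) / Real.exp 1 < 1 - z := by linarith
      have h3 : (1:ℝ) ≤ Real.exp 1 * (1 - z) := by
        rw [div_lt_iff₀ hE0] at h1; linarith [h1]
      have h4 : (0:ℝ) < Real.exp 1 * (1 - z) := by nlinarith
      rw [abs_of_nonneg (div_nonneg hv.le h4.le)]
      calc vbar j / (Real.exp 1 * (1 - z)) ≤ vbar j / 1 :=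
            div_le_div_of_nonneg_left hv.le one_pos h3
        _ = vbar j := div_one _
    · rw [abs_of_pos hv]
  have hgtb : ∀ s, |gt s| ≤ ∑ j, vbar j * Real.exp 1 := by
    intro s
    have hBnn : (0:ℝ) ≤ ∑ j, vbar j * Real.exp 1 :=
      Finset.sum_nonneg fun j _ => mul_nonneg (hvbar j).le hE0.le
    rw [hgtdef]
    by_cases hs : s ∈ Set.Ioc (0:ℝ) 1
    · simp only [if_pos hs]
      calc |∑ j, erQuantileDeriv (vbar j) s * Q j s|
          ≤ ∑ j, |erQuantileDeriv (vbar j) s * Q j s| := Finset.abs_sum_le_sum_abs _ _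
        _ ≤ ∑ j, vbar j * Real.exp 1 := by
            apply Finset.sum_le_sum
            intro j _
            rw [abs_mul]
            calc |erQuantileDeriv (vbar j) s| * |Q j s|
                ≤ (vbar j * Real.exp 1) * 1 :=
                  mul_le_mul (hψb j s) (hQb j s hs) (abs_nonneg _)
                    (mul_nonneg (hvbar j).le hE0.le)
              _ = vbar j * Real.exp 1 := mul_one _
    · simp only [if_neg hs, abs_zero]; exact hBnn
  have hhb : ∀ z ∈ Set.Ioc (0:ℝ) 1, |h z| ≤ ∑ j, vbar j := by
    intro z hz
    rw [hhdef]
    calc |∑ j, erQuantile (vbar j) z * Q j z|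
        ≤ ∑ j, |erQuantile (vbar j) z * Q j z| := Finset.abs_sum_le_sum_abs _ _
      _ ≤ ∑ j, vbar j := by
          apply Finset.sum_le_sum
          intro j _
          rw [abs_mul]
          calc |erQuantile (vbar j) z| * |Q j z|
              ≤ vbar j * 1 :=
                mul_le_mul (hφb j z hz) (hQb j z hz) (abs_nonneg _) (hvbar j).le
            _ = vbar j := mul_one _
  -- integrability
  have hIIh : IntervalIntegrable h volume 0 1 := II_01 hhm hhb
  have hIIgt : ∀ a b, IntervalIntegrable gt volume a b :=
    fun a b => II_glob hgtm hgtb a b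
  have hGtc : Continuous (fun z => ∫ s in (0:ℝ)..z, gt s) :=
    intervalIntegral.continuous_primitive hIIgt 0
  have hII2 : IntervalIntegrable (fun s => (1 - s) * gt s) volume 0 1 := by
    refine II_01 ((measurable_const.sub measurable_id).mul hgtm)
      (C := ∑ j, vbar j * Real.exp 1) ?_
    intro x hx
    rw [abs_mul]
    calc |1 - x| * |gt x| ≤ 1 * (∑ j, vbar j * Real.exp 1) := by
          apply mul_le_mul _ (hgtb x) (abs_nonneg _) zero_le_one
          rw [abs_le]; constructor <;> [linarith [hx.2]; linarith [hx.1]]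
      _ = ∑ j, vbar j * Real.exp 1 := one_mul _
  -- step 1: replace g by gt inside inner integral
  have step1 : (∫ z in (0:ℝ)..1, (h z - ∫ s in (0:ℝ)..z, g s))
      = ∫ z in (0:ℝ)..1, (h z - ∫ s in (0:ℝ)..z, gt s) := by
    apply intervalIntegral.integral_congr
    intro z hz
    rw [Set.uIcc_of_le zero_le_one] at hz
    show h z - (∫ s in (0:ℝ)..z, g s) = h z - ∫ s in (0:ℝ)..z, gt s
    congr 1
    rw [intervalIntegral.integral_of_le hz.1, intervalIntegral.integral_of_le hz.1]
    refine setIntegral_congr_fun measurableSet_Ioc fun s hs => ?_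
    have hmem : s ∈ Set.Ioc (0:ℝ) 1 := ⟨hs.1, hs.2.trans hz.2⟩
    rw [hgtdef]
    simp [hmem]
  -- main chain
  rw [hc] at *
  calc (∫ z in (0:ℝ)..1, (h z - ∫ s in (0:ℝ)..z, g s))
      = ∫ z in (0:ℝ)..1, (h z - ∫ s in (0:ℝ)..z, gt s) := step1
    _ = (∫ z in (0:ℝ)..1, h z) - ∫ z in (0:ℝ)..1, (∫ s in (0:ℝ)..z, gt s) :=
        intervalIntegral.integral_sub hIIh (hGtc.intervalIntegrable 0 1)
    _ = (∫ z in (0:ℝ)..1, h z) - ∫ z in (0:ℝ)..1, (1 - z) * gt z := by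
        rw [tri hgtm hgtb]
    _ = ∫ z in (0:ℝ)..1, (h z - (1 - z) * gt z) :=
        (intervalIntegral.integral_sub hIIh hII2).symm
    _ = ∫ z in (0:ℝ)..1, ∑ j, (if z < 1 - 1 / Real.exp 1 then 0 else vbar j * Q j z) := by
        rw [intervalIntegral.integral_of_le zero_le_one,
          intervalIntegral.integral_of_le zero_le_one]
        refine setIntegral_congr_fun measurableSet_Ioc fun z hz => ?_
        rw [hgtdef]
        simp only [if_pos hz]
        rw [hhdef, hgdef, Finset.mul_sum, ← Finset.sum_sub_distrib]
        refine Finset.sum_congr rfl fun j _ => ?_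
        have : erQuantile (vbar j) z * Q j z
            - (1 - z) * (erQuantileDeriv (vbar j) z * Q j z)
            = (erQuantile (vbar j) z - (1 - z) * erQuantileDeriv (vbar j) z) * Q j z := by
          ring
        rw [this, key_ptwise, ite_mul, zero_mul]
    _ = ∑ j, ∫ z in (0:ℝ)..1, (if z < 1 - 1 / Real.exp 1 then 0 else vbar j * Q j z) := by
        apply intervalIntegral.integral_finset_sum
        intro j _
        refine II_01 (Measurable.ite measurableSet_Iio measurable_const
          (measurable_const.mul (hQm j))) (C := vbar j) ?_
        intro x hx
        split_ifs
        · rw [abs_zero]; exact (hvbar j).le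
        · rw [abs_mul, abs_of_pos (hvbar j)]
          calc vbar j * |Q j x| ≤ vbar j * 1 :=
              mul_le_mul_of_nonneg_left (hQb j x hx) (hvbar j).le
            _ = vbar j := mul_one _
    _ = ∑ j, vbar j * ∫ z in (1 - 1 / Real.exp 1)..1, Q j z := by
        refine Finset.sum_congr rfl fun j _ => ?_
        have hII : IntervalIntegrable
            (fun z => if z < 1 - 1 / Real.exp 1 then 0 else vbar j * Q j z) volume 0 1 := by
          refine II_01 (Measurable.ite measurableSet_Iio measurable_const
            (measurable_const.mul (hQm j))) (C := vbar j) ?_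
          intro x hx
          split_ifs
          · rw [abs_zero]; exact (hvbar j).le
          · rw [abs_mul, abs_of_pos (hvbar j)]
            calc vbar j * |Q j x| ≤ vbar j * 1 :=
                mul_le_mul_of_nonneg_left (hQb j x hx) (hvbar j).le
              _ = vbar j := mul_one _
        have hsub1 : Set.uIcc (0:ℝ) (1 - 1 / Real.exp 1) ⊆ Set.uIcc (0:ℝ) 1 := by
          rw [Set.uIcc_of_le (by linarith : (0:ℝ) ≤ 1 - 1 / Real.exp 1),
            Set.uIcc_of_le zero_le_one]
          exact Set.Icc_subset_Icc le_rfl (by linarith)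
        have hsub2 : Set.uIcc (1 - 1 / Real.exp 1) (1:ℝ) ⊆ Set.uIcc (0:ℝ) 1 := by
          rw [Set.uIcc_of_le (by linarith : (1:ℝ) - 1 / Real.exp 1 ≤ 1),
            Set.uIcc_of_le zero_le_one]
          exact Set.Icc_subset_Icc (by linarith) le_rfl
        rw [← intervalIntegral.integral_add_adjacent_intervals
          (hII.mono_set hsub1) (hII.mono_set hsub2)]
        have hA : (∫ z in (0:ℝ)..(1 - 1 / Real.exp 1),
            (if z < 1 - 1 / Real.exp 1 then 0 else vbar j * Q j z)) = 0 := by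
          rw [intervalIntegral.integral_of_le (by linarith : (0:ℝ) ≤ 1 - 1 / Real.exp 1)]
          apply integral_eq_zero_of_ae
          have h1 : ∀ᵐ z : ℝ, z ≠ 1 - 1 / Real.exp 1 := by
            rw [ae_iff]
            have : {z : ℝ | ¬z ≠ 1 - 1 / Real.exp 1} = {1 - 1 / Real.exp 1} := by
              ext z; simp
            rw [this]; exact Real.volume_singleton
          filter_upwards [ae_restrict_mem measurableSet_Ioc, ae_restrict_of_ae h1]
            with z hz hne
          have : z < 1 - 1 / Real.exp 1 := lt_of_le_of_ne hz.2 hne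
          simp only [Pi.zero_apply, if_pos this]
        have hB : (∫ z in (1 - 1 / Real.exp 1)..(1:ℝ),
            (if z < 1 - 1 / Real.exp 1 then 0 else vbar j * Q j z))
            = vbar j * ∫ z in (1 - 1 / Real.exp 1)..1, Q j z := by
          rw [← intervalIntegral.integral_const_mul]
          apply intervalIntegral.integral_congr
          intro z hz
          rw [Set.uIcc_of_le (by linarith : (1:ℝ) - 1 / Real.exp 1 ≤ 1)] at hz
          simp only [if_neg (not_lt.2 hz.1)]
        rw [hA, hB, zero_add]
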